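/- Connectivity of the backbone network: let s̄ = (H, E') be a design solution and let S ⊂ V be such that no interhub edge of E' lies in the cutset δ(S). Then no commodity r with o^r ∈ H ∩ S and d^r ∈ H ∖ S admits a consistent r-path in the solution network of s̄. Consequently, if w_{km} > 0 for every ordered pair (k,m) of distinct nodes, then every design solution in whose solution network all commodities admit consistent r-paths satisfies the connectivity inequalities: Σ_{km ∈ δ(S)} y_{km} ≥ z_i + z_j − 1 for every S ⊂ V and every i ∈ S, j ∉ S, where z_k = 1 iff k ∈ H and y_{km} = 1 iff km ∈ E'. -/

import Mathlib

open scoped Classical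
open Finset

/-- A consistent r-path, given by its list `ks` of intermediate hubs, for a
commodity with origin `a` and destination `b`, in the design solution with hub
set `H` and interhub edge set `E'` (encoded as a set of ordered pairs of
distinct hubs, closed under swapping). -/
def IsRPath {n : ℕ} (H : Finset (Fin n)) (E' : Finset (Fin n × Fin n))
    (a b : Fin n) (ks : List (Fin n)) : Prop :=
  ks ≠ [] ∧ ks.Nodup ∧ (∀ k ∈ ks, k ∈ H) ∧
    ks.Chain' (fun x y => (x, y) ∈ E') ∧
    (a ∈ H → ks.head? = some a) ∧ (b ∈ H → ks.getLast? = some b)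

/-- Connectivity of the backbone network.  First part: if no interhub edge of
`E'` lies in the cutset `δ(S)`, then no commodity with origin a hub in `S` and
destination a hub outside `S` admits a consistent r-path.  Second part: if all
pairwise demands are positive, then every design solution in whose solution
network all commodities admit consistent r-paths satisfies the connectivity
inequalities `Σ_{km ∈ δ(S)} y_{km} ≥ z_i + z_j − 1` for all `S` and all
`i ∈ S`, `j ∉ S`. -/
lemma chainMem {α : Type*} {Rel : α → α → Prop} {P : α → Prop}
    (hpres : ∀ x y, Rel x y → P x → P y) :
    ∀ (l : List α), l.Chain' Rel → (∀ a ∈ l.head?, P a) → ∀ x ∈ l, P x := by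
  intro l
  induction l with
  | nil => simp
  | cons a t ih =>
    intro hch hhead x hx
    replace hch := List.isChain_cons.1 hch
    have ha : P a := hhead a (by simp)
    rcases List.mem_cons.1 hx with rfl | hx
    · exact ha
    · exact ih hch.2 (fun b hb => hpres a b (hch.1 b hb) ha) x hx

theorem statement5 {n : ℕ} (hn : 2 ≤ n) {R : Type} [Fintype R]
    (o d : R → Fin n) (hod : ∀ r, o r ≠ d r)
    (w : R → ℝ) (hw : ∀ r, 0 ≤ w r)
    (hinj : Function.Injective fun r => (o r, d r)) :
    (∀ (H : Finset (Fin n)) (E' : Finset (Fin n × Fin n)),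
      H.Nonempty →
      (∀ p ∈ E', p.1 ≠ p.2 ∧ p.1 ∈ H ∧ p.2 ∈ H ∧ (p.2, p.1) ∈ E') →
      ∀ S : Finset (Fin n),
        (∀ k m : Fin n, (k, m) ∈ E' → k ∈ S → m ∈ S) →
        ∀ r, o r ∈ H → o r ∈ S → d r ∈ H → d r ∉ S →
          ¬ ∃ ks, IsRPath H E' (o r) (d r) ks) ∧
    ((∀ i j : Fin n, i ≠ j → 0 < ∑ r, if o r = i ∧ d r = j then w r else 0) →
      ∀ (H : Finset (Fin n)) (E' : Finset (Fin n × Fin n)),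
        H.Nonempty →
        (∀ p ∈ E', p.1 ≠ p.2 ∧ p.1 ∈ H ∧ p.2 ∈ H ∧ (p.2, p.1) ∈ E') →
        (∀ r, ∃ ks, IsRPath H E' (o r) (d r) ks) →
        ∀ S : Finset (Fin n), ∀ i ∈ S, ∀ j ∉ S,
          (if i ∈ H then (1 : ℝ) else 0) + (if j ∈ H then (1 : ℝ) else 0) - 1 ≤
            ∑ p ∈ univ.filter (fun p : Fin n × Fin n => p.1 ∈ S ∧ p.2 ∉ S),
              (if p ∈ E' then (1 : ℝ) else 0)) := by
  have part1 : ∀ (H : Finset (Fin n)) (E' : Finset (Fin n × Fin n)),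
      H.Nonempty →
      (∀ p ∈ E', p.1 ≠ p.2 ∧ p.1 ∈ H ∧ p.2 ∈ H ∧ (p.2, p.1) ∈ E') →
      ∀ S : Finset (Fin n),
        (∀ k m : Fin n, (k, m) ∈ E' → k ∈ S → m ∈ S) →
        ∀ r, o r ∈ H → o r ∈ S → d r ∈ H → d r ∉ S →
          ¬ ∃ ks, IsRPath H E' (o r) (d r) ks := by
    rintro H E' _ hsym S hclosed r hoH hoS hdH hdS ⟨ks, hne, hnd, hH, hchain, hhead, hlast⟩
    have hhead' := hhead hoH
    have hlast' := hlast hdH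
    have hall : ∀ x ∈ ks, x ∈ S := by
      refine chainMem (fun x y hxy hx => hclosed x y hxy hx) ks hchain ?_
      intro a ha
      rw [hhead'] at ha
      simp at ha
      subst ha
      exact hoS
    have : d r ∈ ks := by
      obtain ⟨h, heq⟩ := List.mem_getLast?_eq_getLast (x := d r) (l := ks)
        (by simp [hlast', Option.mem_def])
      exact heq ▸ List.getLast_mem h
    exact hdS (hall _ this)
  refine ⟨part1, ?_⟩
  intro hpos H E' hHne hsym hpaths S i hiS j hjS
  have hsum0 : (0:ℝ) ≤ ∑ p ∈ univ.filter (fun p : Fin n × Fin n => p.1 ∈ S ∧ p.2 ∉ S),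
      (if p ∈ E' then (1 : ℝ) else 0) :=
    Finset.sum_nonneg (fun p _ => by positivity)
  by_cases hiH : i ∈ H
  · by_cases hjH : j ∈ H
    · simp only [hiH, hjH, if_pos]
      -- need sum ≥ 1
      have hij : i ≠ j := fun h => hjS (h ▸ hiS)
      -- get commodity r with o r = i, d r = j
      obtain ⟨r, hro, hrd⟩ : ∃ r, o r = i ∧ d r = j := by
        by_contra h
        push_neg at h
        have : (∑ r, if o r = i ∧ d r = j then w r else 0) = 0 := by
          refine Finset.sum_eq_zero fun r _ => ?_
          rw [if_neg]
          rintro ⟨h1, h2⟩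
          exact h r h1 h2
        have := hpos i j hij
        linarith
      -- there must be a crossing edge
      obtain ⟨k, m, hkm, hkS, hmS⟩ : ∃ k m : Fin n, (k, m) ∈ E' ∧ k ∈ S ∧ m ∉ S := by
        by_contra h
        push_neg at h
        exact part1 H E' hHne hsym S (fun k m hkm hkS => h k m hkm hkS)
          r (hro ▸ hiH) (hro ▸ hiS) (hrd ▸ hjH) (hrd ▸ hjS) (hpaths r)
      have hmem : (k, m) ∈ univ.filter (fun p : Fin n × Fin n => p.1 ∈ S ∧ p.2 ∉ S) := by
        simp [hkS, hmS]
      calc (1:ℝ) + 1 - 1 = (if ((k, m) : Fin n × Fin n) ∈ E' then (1:ℝ) else 0) := by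
            rw [if_pos hkm]; ring
        _ ≤ _ := Finset.single_le_sum (f := fun p => if p ∈ E' then (1:ℝ) else 0) (fun p _ => by split <;> norm_num) hmem
    · simp only [hjH, if_neg, not_false_iff, hiH, if_pos]
      linarith
  · simp only [hiH, if_neg, not_false_iff]
    have : (0:ℝ) + (if j ∈ H then (1:ℝ) else 0) - 1 ≤ 0 := by split <;> norm_num
    linarith
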